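/- Let n_1, …, n_m be positive integers summing to N and let μ be the conjugate of the partition obtained by sorting (n_1, …, n_m) in decreasing order. Then for every nilpotent N×N matrix X over a field which is strictly block upper triangular with respect to blocks of sizes n_1, …, n_m, the Jordan type of X is dominated by μ. -/

import Mathlib

set_option linter.unusedSectionVars false
set_option maxHeartbeats 1000000

open Module

/-- The nilpotent Jordan block of size `m`: ones on the superdiagonal. -/
def jordanBlock (K : Type*) [Zero K] [One K] (m : ℕ) : Matrix (Fin m) (Fin m) K :=
  Matrix.of fun i j => if (i : ℕ) + 1 = (j : ℕ) then 1 else 0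

/-- `J` has Jordan type `lam`. -/
def HasJordanType {K : Type*} [Field K] {ι : Type*} [Fintype ι] [DecidableEq ι]
    (J : Matrix ι ι K) {m : ℕ} (lam : Fin m → ℕ) : Prop :=
  ∃ (e : ι ≃ (Σ i : Fin m, Fin (lam i))) (P : Matrix ι ι K),
    IsUnit P.det ∧
    J * P = P * ((Matrix.blockDiagonal' (fun i => jordanBlock K (lam i))).submatrix e e)

/-- Sum of the `r` largest elements of a multiset of naturals. -/
def topSum (s : Multiset ℕ) (r : ℕ) : ℕ :=
  (((s.sort (· ≤ ·)).reverse).take r).sum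

/-- `a` dominates `b` (as partitions). -/
def Dominates (a b : Multiset ℕ) : Prop := ∀ r : ℕ, topSum b r ≤ topSum a r

/-! ### Combinatorial lemmas -/

lemma dc_range (S : Finset ℕ) (h : ∀ x ∈ S, ∀ y, y ≤ x → y ∈ S) :
    S = Finset.range S.card := by
  have hsub : S ⊆ Finset.range S.card := by
    intro x hx
    have h1 : Finset.range (x+1) ⊆ S := fun y hy =>
      h x hx y (Nat.lt_succ_iff.mp (Finset.mem_range.mp hy))
    have := Finset.card_le_card h1
    simp only [Finset.card_range] at this
    exact Finset.mem_range.mpr this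
  exact Finset.eq_of_subset_of_card_le hsub (by simp)

lemma filter_antitone_card (w : ℕ → ℕ) (hw : Antitone w) (c n K : ℕ) (hK : K ≤ n) :
    ((Finset.range K).filter (fun s => c ≤ w s)).card
      = min K ((Finset.range n).filter (fun s => c ≤ w s)).card := by
  have key : ∀ t : ℕ, (Finset.range t).filter (fun s => c ≤ w s)
      = Finset.range ((Finset.range t).filter (fun s => c ≤ w s)).card := by
    intro t
    apply dc_range
    intro x hx y hy
    simp only [Finset.mem_filter, Finset.mem_range] at hx ⊢
    exact ⟨lt_of_le_of_lt hy hx.1, hx.2.trans (hw hy)⟩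
  have hKn : (Finset.range K).filter (fun s => c ≤ w s)
      = (Finset.range n).filter (fun s => c ≤ w s) ∩ Finset.range K := by
    ext x
    simp only [Finset.mem_filter, Finset.mem_inter, Finset.mem_range]
    constructor
    · rintro ⟨h1, h2⟩; exact ⟨⟨h1.trans_le hK, h2⟩, h1⟩
    · rintro ⟨⟨_, h2⟩, h3⟩; exact ⟨h3, h2⟩
  have hri : ∀ a b : ℕ, Finset.range a ∩ Finset.range b = Finset.range (min a b) := by
    intro a b; ext x; simp only [Finset.mem_inter, Finset.mem_range]; omega
  rw [hKn, key n, hri]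
  simp only [Finset.card_range]
  omega

lemma core_min_sum (c d : ℕ → ℕ) (M r : ℕ) (hd : Antitone d)
    (heq : ∑ s ∈ Finset.range M, c s = ∑ s ∈ Finset.range M, d s)
    (hdom : ∀ k, k ≤ M → ∑ s ∈ Finset.range k, d s ≤ ∑ s ∈ Finset.range k, c s) :
    ∑ s ∈ Finset.range M, min r (c s) ≤ ∑ s ∈ Finset.range M, min r (d s) := by
  have hc : ∑ s ∈ Finset.range M, min r (c s) + ∑ s ∈ Finset.range M, (c s - r)
      = ∑ s ∈ Finset.range M, c s := by
    rw [← Finset.sum_add_distrib]; apply Finset.sum_congr rfl; intros; omega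
  have hd' : ∑ s ∈ Finset.range M, min r (d s) + ∑ s ∈ Finset.range M, (d s - r)
      = ∑ s ∈ Finset.range M, d s := by
    rw [← Finset.sum_add_distrib]; apply Finset.sum_congr rfl; intros; omega
  suffices hBA : ∑ s ∈ Finset.range M, (d s - r) ≤ ∑ s ∈ Finset.range M, (c s - r) by
    omega
  set k := ((Finset.range M).filter (fun s => r + 1 ≤ d s)).card with hk
  have hfil : (Finset.range M).filter (fun s => r + 1 ≤ d s) = Finset.range k := by
    apply dc_range
    intro x hx y hy
    simp only [Finset.mem_filter, Finset.mem_range] at hx ⊢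
    exact ⟨lt_of_le_of_lt hy hx.1, hx.2.trans (hd hy)⟩
  have hkM : k ≤ M := by
    rw [hk]; exact (Finset.card_filter_le _ _).trans (by simp)
  have hmem : ∀ s ∈ Finset.range k, r + 1 ≤ d s := by
    intro s hs; rw [← hfil] at hs; exact (Finset.mem_filter.mp hs).2
  have hB : ∑ s ∈ Finset.range M, (d s - r) = ∑ s ∈ Finset.range k, (d s - r) := by
    refine (Finset.sum_subset (Finset.range_subset_range.mpr hkM) ?_).symm
    intro x hx hnx
    have : x ∉ (Finset.range M).filter (fun s => r + 1 ≤ d s) := by rw [hfil]; exact hnx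
    simp only [Finset.mem_filter] at this
    have h5 : ¬ (r + 1 ≤ d x) := fun h => this ⟨hx, h⟩
    omega
  have h1 : ∑ s ∈ Finset.range k, (d s - r) + r * k = ∑ s ∈ Finset.range k, d s := by
    have : ∑ s ∈ Finset.range k, (d s - r + r) = ∑ s ∈ Finset.range k, d s := by
      apply Finset.sum_congr rfl; intro s hs; have := hmem s hs; omega
    rw [← this, Finset.sum_add_distrib, Finset.sum_const, Finset.card_range, smul_eq_mul,
      mul_comm]
  have h2 : ∑ s ∈ Finset.range k, c s ≤ ∑ s ∈ Finset.range k, (c s - r) + r * k := by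
    have : ∑ s ∈ Finset.range k, c s ≤ ∑ s ∈ Finset.range k, (c s - r + r) := by
      apply Finset.sum_le_sum; intros; omega
    rwa [Finset.sum_add_distrib, Finset.sum_const, Finset.card_range, smul_eq_mul,
      mul_comm] at this
  have h3 : ∑ s ∈ Finset.range k, (c s - r) ≤ ∑ s ∈ Finset.range M, (c s - r) :=
    Finset.sum_le_sum_of_subset (Finset.range_subset_range.mpr hkM)
  have h4 := hdom k hkM
  omega

lemma topSum_exists_sub (s : Multiset ℕ) (r : ℕ) :
    ∃ t : Multiset ℕ, t ≤ s ∧ Multiset.card t ≤ r ∧ topSum s r = t.sum := by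
  refine ⟨↑(((s.sort (· ≤ ·)).reverse).take r), ?_, ?_, ?_⟩
  · calc (↑(((s.sort (· ≤ ·)).reverse).take r) : Multiset ℕ)
        ≤ ↑((s.sort (· ≤ ·)).reverse) :=
          Multiset.coe_le.mpr (List.take_sublist _ _).subperm
      _ = s := by rw [Multiset.coe_reverse, Multiset.sort_eq]
  · rw [Multiset.coe_card]
    exact (List.length_take).le.trans (min_le_left _ _)
  · rfl

lemma topSum_antitone (w : ℕ → ℕ) (hw : Antitone w) (n r : ℕ) :
    topSum ↑(List.map w (List.range n)) r = ∑ j ∈ Finset.range (min r n), w j := by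
  have hsort : (Multiset.sort (↑(List.map w (List.range n)) : Multiset ℕ) (· ≤ ·))
      = (List.map w (List.range n)).reverse := by
    apply List.Perm.eq_of_pairwise' (r := (· ≤ ·))
    · exact Multiset.pairwise_sort _ _
    · rw [List.pairwise_reverse, List.pairwise_map]
      exact (List.pairwise_lt_range (n := n)).imp (fun h => hw h.le)
    · rw [← Multiset.coe_eq_coe, Multiset.sort_eq, Multiset.coe_reverse]
  rw [topSum, hsort, List.reverse_reverse, ← List.map_take, List.take_range]
  rw [← Multiset.sum_coe, ← Multiset.map_coe]
  rw [Finset.sum_eq_multiset_sum]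
  congr 1

/-- Count in a range: `#{s < k : s + 1 ≤ x} = min x k`. -/
lemma RC (k x : ℕ) :
    ∑ s ∈ Finset.range k, (if s + 1 ≤ x then 1 else 0) = min x k := by
  rw [← Finset.card_filter]
  have : (Finset.range k).filter (fun s => s + 1 ≤ x) = Finset.range (min x k) := by
    ext s; simp only [Finset.mem_filter, Finset.mem_range]; omega
  rw [this, Finset.card_range]

lemma FC2 (t x : ℕ) :
    ∑ j : Fin t, (if (j : ℕ) + 1 ≤ x then 1 else 0) = min x t := by
  rw [Fin.sum_univ_eq_sum_range (fun j => if j + 1 ≤ x then 1 else 0), RC]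

lemma FC (t x : ℕ) :
    ((Finset.univ : Finset (Fin t)).filter fun j : Fin t => (j : ℕ) + 1 ≤ x).card = min x t := by
  rw [Finset.card_filter (fun j : Fin t => (j : ℕ) + 1 ≤ x) Finset.univ, FC2]

/-- Swap lemma. -/
lemma SW (t k : ℕ) (g : Fin t → ℕ) :
    ∑ s ∈ Finset.range k, ((Finset.univ : Finset (Fin t)).filter fun j => s + 1 ≤ g j).card
      = ∑ j : Fin t, min (g j) k := by
  have : ∀ s, ((Finset.univ : Finset (Fin t)).filter fun j => s + 1 ≤ g j).card
      = ∑ j : Fin t, (if s + 1 ≤ g j then 1 else 0) := fun s => Finset.card_filter _ _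
  simp only [this]
  rw [Finset.sum_comm]
  apply Finset.sum_congr rfl
  intro j _
  rw [RC]

lemma MS (t : Multiset ℕ) (M : ℕ) (ht : ∀ x ∈ t, x < M) :
    t.sum = ∑ s ∈ Finset.range M, t.countP (fun x => s + 1 ≤ x) := by
  induction t using Multiset.induction_on with
  | empty => simp
  | cons a t ih =>
    have ha : a < M := ht a (Multiset.mem_cons_self a t)
    have ht' : ∀ x ∈ t, x < M := fun x hx => ht x (Multiset.mem_cons_of_mem hx)
    rw [Multiset.sum_cons, ih ht']
    simp only [Multiset.countP_cons]
    rw [Finset.sum_add_distrib, RC]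
    omega

/-! ### Linear algebra: coordinate subspaces -/

def coordSub (K : Type*) [Field K] {ι : Type*} (P : ι → Prop) : Submodule K (ι → K) where
  carrier := {v | ∀ p, ¬ P p → v p = 0}
  add_mem' := by intro a b ha hb p hp; simp [ha p hp, hb p hp]
  zero_mem' := by intro p _; rfl
  smul_mem' := by intro c v hv p hp; simp [hv p hp]

lemma finrank_coordSub {K : Type*} [Field K] {ι : Type*} [Fintype ι] (P : ι → Prop)
    [DecidablePred P] :
    finrank K (coordSub K (ι := ι) P) = Fintype.card {p // P p} := by
  have e : coordSub K (ι := ι) P ≃ₗ[K] ({p // P p} → K) := by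
    refine
      { toFun := fun v t => v.1 t.1
        map_add' := by intros; rfl
        map_smul' := by intros; rfl
        invFun := fun w => ⟨fun p => if h : P p then w ⟨p, h⟩ else 0, by
          intro p hp; simp [hp]⟩
        left_inv := ?_
        right_inv := ?_ }
    · rintro ⟨v, hv⟩
      ext p
      by_cases h : P p <;> simp [h]
      exact (hv p h).symm
    · intro w
      ext t
      simp [t.2]
  rw [e.finrank_eq, finrank_fintype_fun_eq_card]

lemma dimstep {K : Type*} [Field K] {V : Type*} [AddCommGroup V] [Module K V]
    [FiniteDimensional K V]
    (f : V →ₗ[K] V) (A B U : Submodule K V) (hAB : A.map f ≤ B) (hUB : U ≤ B) :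
    finrank K A + finrank K U ≤ finrank K B + finrank K ↥(A ⊓ U.comap f) := by
  classical
  set U' : Submodule K B := U.comap B.subtype with hU'
  have hfr : ∀ x : A, f x.1 ∈ B := fun x => hAB ⟨x.1, x.2, rfl⟩
  let g : A →ₗ[K] B ⧸ U' := U'.mkQ.comp ((f.domRestrict A).codRestrict B (fun x => hfr x))
  have hker : LinearMap.ker g = (A ⊓ U.comap f).comap A.subtype := by
    ext x
    simp only [LinearMap.mem_ker, Submodule.mem_comap, Submodule.mem_inf, g,
      LinearMap.comp_apply, Submodule.mkQ_apply, Submodule.Quotient.mk_eq_zero,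
      LinearMap.codRestrict_apply, LinearMap.domRestrict_apply, hU', Submodule.coe_subtype]
    exact ⟨fun h => ⟨x.2, h⟩, fun h => h.2⟩
  have h1 : finrank K A = finrank K (LinearMap.range g) + finrank K (LinearMap.ker g) :=
    (LinearMap.finrank_range_add_finrank_ker g).symm
  have h2 : finrank K (LinearMap.ker g) = finrank K ↥(A ⊓ U.comap f) := by
    rw [hker]
    exact LinearEquiv.finrank_eq (Submodule.comapSubtypeEquivOfLe inf_le_left)
  have h3 : finrank K (LinearMap.range g) ≤ finrank K (B ⧸ U') := Submodule.finrank_le _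
  have h4 : finrank K (B ⧸ U') + finrank K U' = finrank K B :=
    Submodule.finrank_quotient_add_finrank U'
  have h5 : finrank K U' = finrank K U :=
    LinearEquiv.finrank_eq (Submodule.comapSubtypeEquivOfLe hUB)
  omega

/-! ### Jordan block powers -/

lemma jordanBlock_pow {K : Type*} [Field K] (n k : ℕ) :
    (jordanBlock K n) ^ k = Matrix.of fun (a b : Fin n) => if (a : ℕ) + k = (b : ℕ) then 1 else 0 := by
  induction k with
  | zero =>
    ext a b
    simp only [pow_zero, Matrix.one_apply, Matrix.of_apply, Nat.add_zero]
    by_cases h : a = b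
    · simp [h]
    · rw [if_neg h, if_neg (fun hh => h (Fin.ext hh))]
  | succ k ih =>
    ext a b
    rw [pow_succ, Matrix.mul_apply]
    simp only [ih]
    simp only [jordanBlock, Matrix.of_apply]
    by_cases h : (a : ℕ) + k < n
    · rw [Finset.sum_eq_single (⟨(a : ℕ) + k, h⟩ : Fin n)]
      · simp [Nat.add_assoc]
      · intro c _ hc
        rw [if_neg (fun hh => hc (Fin.ext hh.symm)), zero_mul]
      · intro hc; exact absurd (Finset.mem_univ _) hc
    · rw [Finset.sum_eq_zero, eq_comm,
        if_neg (show ¬((a : ℕ) + (k+1) = (b : ℕ)) by have := b.isLt; omega)]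
      intro c _
      rw [if_neg (show ¬((a : ℕ) + k = (c : ℕ)) by have := c.isLt; omega), zero_mul]

section EMat
variable {K : Type*} [Field K] {m' : ℕ} (lam : Fin m' → ℕ)

def EMat (k : ℕ) : Matrix (Σ i : Fin m', Fin (lam i)) (Σ i : Fin m', Fin (lam i)) K :=
  Matrix.of fun p q => if p.1 = q.1 ∧ (p.2 : ℕ) + k = (q.2 : ℕ) then 1 else 0

lemma blockDiagonal'_jordan_pow (k : ℕ) :
    (Matrix.blockDiagonal' (fun i => jordanBlock K (lam i))) ^ k = EMat lam k := by
  rw [← Matrix.blockDiagonal'_pow]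
  ext ⟨i, a⟩ ⟨j, b⟩
  by_cases h : i = j
  · subst h
    rw [Matrix.blockDiagonal'_apply_eq]
    simp [jordanBlock_pow, EMat]
  · rw [Matrix.blockDiagonal'_apply_ne _ _ _ h]
    simp [EMat, h]

lemma EMat_mulVec (k : ℕ) (v : (Σ i : Fin m', Fin (lam i)) → K) (i : Fin m')
    (a : Fin (lam i)) :
    (EMat lam k (K := K)).mulVec v ⟨i, a⟩
      = if h : (a : ℕ) + k < lam i then v ⟨i, ⟨(a : ℕ) + k, h⟩⟩ else 0 := by
  rw [Matrix.mulVec, dotProduct]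
  by_cases h : (a : ℕ) + k < lam i
  · rw [dif_pos h, Finset.sum_eq_single (⟨i, ⟨(a : ℕ) + k, h⟩⟩ : Σ i : Fin m', Fin (lam i))]
    · simp [EMat]
    · rintro ⟨j, b⟩ _ hq
      rw [EMat, Matrix.of_apply]
      rcases eq_or_ne (i : Fin m') j with rfl | hij
      · rw [if_neg, zero_mul]
        rintro ⟨-, hb⟩
        exact hq (by congr 1; exact Fin.ext hb.symm)
      · rw [if_neg (fun hh => hij hh.1), zero_mul]
    · intro hc; exact absurd (Finset.mem_univ _) hc
  · rw [dif_neg h, Finset.sum_eq_zero]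
    rintro ⟨j, b⟩ _
    rw [EMat, Matrix.of_apply]
    rcases eq_or_ne (i : Fin m') j with rfl | hij
    · rw [if_neg, zero_mul]
      rintro ⟨-, hb⟩
      exact h (hb ▸ b.isLt)
    · rw [if_neg (fun hh => hij hh.1), zero_mul]

lemma ker_EMat (k : ℕ) :
    LinearMap.ker (EMat lam k (K := K)).mulVecLin
      = coordSub K (fun q : Σ i : Fin m', Fin (lam i) => (q.2 : ℕ) < k) := by
  ext v
  constructor
  · intro hv q hq
    obtain ⟨i, b⟩ := q
    dsimp only at hq
    have hv' : (EMat lam k (K := K)).mulVec v = 0 := hv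
    have hlt : (b : ℕ) - k + k < lam i := by have := b.isLt; omega
    have h2 := congrFun hv' ⟨i, ⟨(b : ℕ) - k, by omega⟩⟩
    rw [EMat_mulVec] at h2
    simp only [dif_pos hlt] at h2
    have hbb : (⟨(b : ℕ) - k + k, hlt⟩ : Fin (lam i)) = b := Fin.ext (by simp; omega)
    rw [hbb] at h2
    exact h2
  · intro hv
    rw [LinearMap.mem_ker]
    ext ⟨i, a⟩
    rw [Matrix.mulVecLin_apply, EMat_mulVec]
    by_cases h : (a : ℕ) + k < lam i
    · rw [dif_pos h]
      exact hv ⟨i, ⟨(a : ℕ) + k, h⟩⟩ (by simp)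
    · rw [dif_neg h]; rfl

lemma card_sub_sigma (k : ℕ) :
    Fintype.card {q : Σ i : Fin m', Fin (lam i) // (q.2 : ℕ) < k}
      = ∑ i, min (lam i) k := by
  rw [Fintype.card_subtype]
  rw [Finset.card_filter, ← Finset.univ_sigma_univ, Finset.sum_sigma]
  apply Finset.sum_congr rfl
  intro i _
  have : ∀ a : Fin (lam i), ((if ((⟨i, a⟩ : Σ i : Fin m', Fin (lam i)).2 : ℕ) < k then 1 else 0) : ℕ)
      = if (a : ℕ) + 1 ≤ k then 1 else 0 := by intro a; rfl
  simp only [this]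
  rw [FC2, min_comm]

end EMat

/-! ### Matrix/linear map conversions -/

lemma mulVecLin_pow {K : Type*} [Field K] {ι : Type*} [Fintype ι] [DecidableEq ι]
    (M : Matrix ι ι K) (k : ℕ) :
    (M ^ k).mulVecLin = M.mulVecLin ^ k := by
  induction k with
  | zero => simp [Matrix.mulVecLin_one]; rfl
  | succ k ih => rw [pow_succ, Matrix.mulVecLin_mul, ih, pow_succ, Module.End.mul_eq_comp]

lemma submatrix_pow {K : Type*} [Field K] {ι κ : Type*} [Fintype ι] [DecidableEq ι] [Fintype κ]
    [DecidableEq κ] (M : Matrix κ κ K) (e : ι ≃ κ) (k : ℕ) :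
    (M.submatrix e e) ^ k = (M ^ k).submatrix e e := by
  induction k with
  | zero => simp [Matrix.submatrix_one_equiv]
  | succ k ih => rw [pow_succ, ih, Matrix.submatrix_mul_equiv, ← pow_succ]

lemma finrank_ker_mulVecLin {K : Type*} [Field K] {ι : Type*} [Fintype ι] [DecidableEq ι]
    (M : Matrix ι ι K) :
    finrank K ↥(LinearMap.ker M.mulVecLin) + M.rank = Fintype.card ι := by
  have := LinearMap.finrank_range_add_finrank_ker M.mulVecLin
  rw [finrank_fintype_fun_eq_card] at this
  rw [Matrix.rank]
  omega

/-- Main computation: kernel dimensions of powers from the Jordan type. -/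
lemma LIN {K : Type*} [Field K] {ι : Type*} [Fintype ι] [DecidableEq ι]
    (X : Matrix ι ι K) {m' : ℕ} (lam : Fin m' → ℕ) (hJT : HasJordanType X lam) (k : ℕ) :
    finrank K ↥(LinearMap.ker (X.mulVecLin ^ k)) = ∑ i, min (lam i) k := by
  obtain ⟨e, P, hP, hXP⟩ := hJT
  set J := Matrix.blockDiagonal' (fun i => jordanBlock K (lam i)) with hJ
  have hcomm : ∀ k : ℕ, X ^ k * P = P * (J.submatrix e e) ^ k := by
    intro k
    induction k with
    | zero => simp
    | succ k ih =>
      rw [pow_succ, pow_succ, mul_assoc, hXP, ← mul_assoc, ih, mul_assoc]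
  have hrank : (X ^ k).rank = (EMat lam k (K := K)).rank := by
    calc (X ^ k).rank = (X ^ k * P).rank :=
          (Matrix.rank_mul_eq_left_of_isUnit_det P (X ^ k) hP).symm
      _ = (P * (J.submatrix e e) ^ k).rank := by rw [hcomm]
      _ = ((J.submatrix e e) ^ k).rank :=
          Matrix.rank_mul_eq_right_of_isUnit_det P _ hP
      _ = ((J ^ k).submatrix e e).rank := by rw [submatrix_pow]
      _ = (J ^ k).rank := Matrix.rank_submatrix _ e e
      _ = (EMat lam k (K := K)).rank := by rw [hJ, blockDiagonal'_jordan_pow]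
  have hker2 : finrank K ↥(LinearMap.ker (EMat lam k (K := K)).mulVecLin)
      = ∑ i, min (lam i) k := by
    rw [ker_EMat, finrank_coordSub, card_sub_sigma]
  have hrn1 := finrank_ker_mulVecLin (X ^ k)
  have hrn2 := finrank_ker_mulVecLin (EMat lam k (K := K))
  have hcard : Fintype.card ι = Fintype.card (Σ i : Fin m', Fin (lam i)) :=
    Fintype.card_congr e
  rw [mulVecLin_pow] at hrn1
  omega

/-! ### Flag argument: lower bound for kernels of powers -/

section KL

variable {K : Type*} [Field K] {m : ℕ} {nn : Fin m → ℕ}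
  (X : Matrix (Σ i : Fin m, Fin (nn i)) (Σ i : Fin m, Fin (nn i)) K)

abbrev Vk (K : Type*) [Field K] (nn : Fin m → ℕ) (k : ℕ) :
    Submodule K ((Σ i : Fin m, Fin (nn i)) → K) :=
  coordSub K (fun p => (p.1 : ℕ) < k)

lemma Vk_mono {k l : ℕ} (h : k ≤ l) : Vk K nn k ≤ Vk K nn l := by
  intro v hv p hp
  exact hv p (fun hlt => hp (hlt.trans_le h))

lemma finrank_Vk (k : ℕ) :
    finrank K (Vk K nn k) = ∑ i ∈ Finset.univ.filter (fun i : Fin m => (i : ℕ) < k), nn i := by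
  rw [Vk, finrank_coordSub, Fintype.card_subtype]
  rw [Finset.card_filter]
  rw [← Finset.univ_sigma_univ, Finset.sum_sigma]
  rw [Finset.sum_filter]
  apply Finset.sum_congr rfl
  intro i _
  by_cases h : (i : ℕ) < k <;> simp [h]

lemma X_maps_Vk (hX : ∀ p q : Σ i : Fin m, Fin (nn i), q.1 ≤ p.1 → X p q = 0) (k : ℕ) :
    (Vk K nn (k+1)).map X.mulVecLin ≤ Vk K nn k := by
  rintro w ⟨v, hv, rfl⟩ p hp
  show X.mulVec v p = 0
  rw [Matrix.mulVec, dotProduct]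
  apply Finset.sum_eq_zero
  intro q _
  by_cases hq : (q.1 : ℕ) < k + 1
  · by_cases hpq : q.1 ≤ p.1
    · rw [hX p q hpq, zero_mul]
    · exfalso
      apply hp
      have : (p.1 : ℕ) < (q.1 : ℕ) := lt_of_not_ge hpq
      omega
  · rw [hv q hq, mul_zero]

lemma KL_main (hX : ∀ p q : Σ i : Fin m, Fin (nn i), q.1 ≤ p.1 → X p q = 0)
    (S : Finset (Fin m)) :
    ∀ k : ℕ, (∀ i ∈ S, (i : ℕ) < k) →
      ∑ i ∈ S, nn i ≤ finrank K ↥(LinearMap.ker (X.mulVecLin ^ S.card) ⊓ Vk K nn k) := by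
  classical
  induction S using Finset.induction_on_max with
  | empty => intro k _; simp
  | insert a s hmax ih =>
    intro k hk
    have ha : a ∉ s := fun h => lt_irrefl a (hmax a h)
    have hak : (a : ℕ) < k := hk a (Finset.mem_insert_self a s)
    rw [Finset.card_insert_of_notMem ha, Finset.sum_insert ha]
    set f := X.mulVecLin
    set c := s.card
    have hstep := dimstep f (Vk K nn ((a : ℕ)+1)) (Vk K nn (a : ℕ))
      (LinearMap.ker (f ^ c) ⊓ Vk K nn (a : ℕ)) (X_maps_Vk X hX (a : ℕ)) inf_le_right
    have hIH : ∑ i ∈ s, nn i ≤ finrank K ↥(LinearMap.ker (f ^ c) ⊓ Vk K nn (a : ℕ)) :=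
      ih (a : ℕ) (fun i hi => hmax i hi)
    have hfilter : Finset.univ.filter (fun i : Fin m => (i : ℕ) < (a : ℕ) + 1)
        = insert a (Finset.univ.filter (fun i : Fin m => (i : ℕ) < (a : ℕ))) := by
      ext i
      simp only [Finset.mem_filter, Finset.mem_insert, Finset.mem_univ, true_and]
      constructor
      · intro h
        rcases Nat.lt_succ_iff_lt_or_eq.mp h with h | h
        · exact Or.inr h
        · exact Or.inl (Fin.ext h)
      · rintro (rfl | h)
        · omega
        · omega
    have hdimA : finrank K (Vk K nn ((a : ℕ)+1)) = nn a + finrank K (Vk K nn (a : ℕ)) := by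
      rw [finrank_Vk, finrank_Vk, hfilter, Finset.sum_insert (by simp)]
    have hcomap : Vk K nn ((a : ℕ)+1) ⊓ (LinearMap.ker (f ^ c) ⊓ Vk K nn (a : ℕ)).comap f
        ≤ LinearMap.ker (f ^ (c+1)) ⊓ Vk K nn ((a : ℕ)+1) := by
      rintro v ⟨hv1, hv2⟩
      have hv2' := Submodule.mem_comap.mp hv2
      refine ⟨?_, hv1⟩
      rw [SetLike.mem_coe, LinearMap.mem_ker, pow_succ, Module.End.mul_apply]
      exact hv2'.1
    have hcom' : finrank K ↥(Vk K nn ((a : ℕ)+1) ⊓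
          (LinearMap.ker (f ^ c) ⊓ Vk K nn (a : ℕ)).comap f)
        ≤ finrank K ↥(LinearMap.ker (f ^ (c+1)) ⊓ Vk K nn ((a : ℕ)+1)) :=
      Submodule.finrank_mono hcomap
    have hmono : finrank K ↥(LinearMap.ker (f ^ (c+1)) ⊓ Vk K nn ((a : ℕ)+1))
        ≤ finrank K ↥(LinearMap.ker (f ^ (c+1)) ⊓ Vk K nn k) :=
      Submodule.finrank_mono (inf_le_inf_left _ (Vk_mono hak))
    omega

lemma ker_pow_mono {K : Type*} [Field K] {V : Type*} [AddCommGroup V] [Module K V]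
    (f : V →ₗ[K] V) {a b : ℕ} (h : a ≤ b) :
    LinearMap.ker (f ^ a) ≤ LinearMap.ker (f ^ b) := by
  intro x hx
  rw [LinearMap.mem_ker] at hx ⊢
  rw [show b = (b - a) + a by omega, pow_add, Module.End.mul_apply, hx, map_zero]

lemma KC (hX : ∀ p q : Σ i : Fin m, Fin (nn i), q.1 ≤ p.1 → X p q = 0)
    (S : Finset (Fin m)) (k : ℕ) (hS : S.card ≤ k) :
    ∑ i ∈ S, nn i ≤ finrank K ↥(LinearMap.ker (X.mulVecLin ^ k)) := by
  refine (KL_main X hX S m (fun i _ => i.isLt)).trans (Submodule.finrank_mono ?_)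
  exact le_trans inf_le_left (ker_pow_mono _ hS)

end KL

/-! ### Main theorem -/

lemma ofFn_comp_range {w : ℕ → ℕ} {N : ℕ} :
    List.ofFn (fun j : Fin N => w (j : ℕ)) = List.map w (List.range N) := by
  apply List.ext_getElem
  · simp
  · intro i h1 h2
    simp

/-- the Jordan type of any strictly block upper triangular matrix with
block sizes `nn 0, …, nn (m-1)` is dominated by the conjugate `μ` of the sorted tuple
`nn`, where `μ_j = #{i : nn i ≥ j}` (padded with zero parts, which do not affect
dominance). -/
theorem stmt_13 (K : Type*) [Field K] (m N : ℕ) (nn : Fin m → ℕ)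
    (hpos : ∀ i, 0 < nn i) (hsum : ∑ i, nn i = N)
    (X : Matrix (Σ i : Fin m, Fin (nn i)) (Σ i : Fin m, Fin (nn i)) K)
    (hX : ∀ p q : Σ i : Fin m, Fin (nn i), q.1 ≤ p.1 → X p q = 0)
    (m' : ℕ) (lam : Fin m' → ℕ) (hJT : HasJordanType X lam) :
    Dominates
      (Multiset.map
        (fun j : Fin N => (Finset.univ.filter fun i : Fin m => (j : ℕ) + 1 ≤ nn i).card)
        Finset.univ.val)
      (Multiset.map lam Finset.univ.val) := by
  classical
  intro r
  -- basic cardinalities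
  have hcardnn : Fintype.card (Σ i : Fin m, Fin (nn i)) = N := by
    simp [Fintype.card_sigma, hsum]
  have hNlam : ∑ i, lam i = N := by
    obtain ⟨e, -, -, -⟩ := hJT
    have := Fintype.card_congr e
    simp only [Fintype.card_sigma, Fintype.card_fin] at this
    omega
  have hlamle : ∀ i, lam i ≤ N := fun i =>
    hNlam ▸ Finset.single_le_sum (fun _ _ => Nat.zero_le _) (Finset.mem_univ i)
  have hnnle : ∀ i, nn i ≤ N := fun i =>
    hsum ▸ Finset.single_le_sum (fun _ _ => Nat.zero_le _) (Finset.mem_univ i)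
  set M := N + m + 1 with hM
  set w : ℕ → ℕ := fun j => ((Finset.univ : Finset (Fin m)).filter fun i => j + 1 ≤ nn i).card
    with hw
  have hwanti : Antitone w := by
    intro s s' hss'
    apply Finset.card_le_card
    intro i hi
    simp only [Finset.mem_filter, Finset.mem_univ, true_and] at hi ⊢
    omega
  have hwle : ∀ j, w j ≤ m := fun j => (Finset.card_filter_le _ _).trans (by simp)
  set c : ℕ → ℕ := fun s => ((Finset.univ : Finset (Fin m')).filter fun i => s + 1 ≤ lam i).card
    with hc
  set d : ℕ → ℕ := fun s =>
    ((Finset.univ : Finset (Fin N)).filter fun j : Fin N => s + 1 ≤ w (j : ℕ)).card with hd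
  have hdanti : Antitone d := by
    intro s s' hss'
    apply Finset.card_le_card
    intro i hi
    simp only [Finset.mem_filter, Finset.mem_univ, true_and] at hi ⊢
    omega
  have hdle : ∀ s, d s ≤ N := fun s => (Finset.card_filter_le _ _).trans (by simp)
  have hSWc : ∀ k, ∑ s ∈ Finset.range k, c s = ∑ i, min (lam i) k := fun k => SW m' k lam
  have hSWd : ∀ k, ∑ s ∈ Finset.range k, d s = ∑ j : Fin N, min (w (j : ℕ)) k :=
    fun k => SW N k (fun j => w (j : ℕ))
  have hLIN : ∀ k, finrank K ↥(LinearMap.ker (X.mulVecLin ^ k)) = ∑ i, min (lam i) k :=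
    fun k => LIN X lam hJT k
  -- the key inequality via the flag argument
  have hTOP : ∀ k, ∑ j : Fin N, min (w (j : ℕ)) k ≤ ∑ i, min (lam i) k := by
    intro k
    set Q := min k m with hQ
    set σe : Equiv.Perm (Fin m) := (Fin.revPerm).trans (Tuple.sort nn) with hσe
    have hσmono : ∀ s s' : Fin m, s ≤ s' → nn (σe s') ≤ nn (σe s) := by
      intro s s' h
      have h1 : Fin.rev s' ≤ Fin.rev s := Fin.rev_le_rev.mpr h
      have := Tuple.monotone_sort nn h1
      simpa [hσe, Equiv.trans_apply] using this
    set S : Finset (Fin m) := (Finset.univ.filter (fun s : Fin m => (s : ℕ) + 1 ≤ Q)).image σe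
      with hS
    have hcardS : S.card = Q := by
      rw [hS, Finset.card_image_of_injective _ σe.injective, FC]
      omega
    have htopS : ∀ i ∈ S, ∀ i', i' ∉ S → nn i' ≤ nn i := by
      intro i hi i' hi'
      obtain ⟨s, hs, rfl⟩ := Finset.mem_image.mp hi
      obtain ⟨s', rfl⟩ : ∃ s', σe s' = i' := ⟨σe.symm i', σe.apply_symm_apply i'⟩
      have hs'Q : ¬ ((s' : ℕ) + 1 ≤ Q) := by
        intro hcon
        exact hi' (Finset.mem_image.mpr ⟨s',
          Finset.mem_filter.mpr ⟨Finset.mem_univ _, hcon⟩, rfl⟩)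
      have hsQ : (s : ℕ) + 1 ≤ Q := (Finset.mem_filter.mp hs).2
      exact hσmono s s' (by rw [Fin.le_def]; omega)
    have hminS : ∀ j : Fin N,
        min (w (j : ℕ)) k = (S.filter fun i => (j : ℕ) + 1 ≤ nn i).card := by
      intro j
      by_cases hall : ∀ i ∈ S, (j : ℕ) + 1 ≤ nn i
      · have h1 : S.filter (fun i => (j : ℕ) + 1 ≤ nn i) = S :=
          Finset.filter_true_of_mem hall
        have h2 : Q ≤ w (j : ℕ) := by
          rw [← hcardS, hS]
          apply Finset.card_le_card
          intro i hi
          rw [← hS] at hi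
          exact Finset.mem_filter.mpr ⟨Finset.mem_univ _, hall i hi⟩
        rw [h1, hcardS]
        have := hwle (j : ℕ)
        omega
      · push_neg at hall
        obtain ⟨i0, hi0S, hi0⟩ := hall
        have h1 : (Finset.univ.filter fun i : Fin m => (j : ℕ) + 1 ≤ nn i)
            = S.filter (fun i => (j : ℕ) + 1 ≤ nn i) := by
          ext i
          simp only [Finset.mem_filter, Finset.mem_univ, true_and]
          constructor
          · intro h
            by_cases hiS : i ∈ S
            · exact ⟨hiS, h⟩
            · exact absurd h (by have := htopS i0 hi0S i hiS; omega)
          · exact fun h => h.2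
        have h2 : (S.filter (fun i => (j : ℕ) + 1 ≤ nn i)).card ≤ k :=
          le_trans (le_trans (Finset.card_filter_le _ _) (le_of_eq hcardS)) (by omega)
        have h3 : w (j : ℕ) = (S.filter (fun i => (j : ℕ) + 1 ≤ nn i)).card := by
          rw [hw]; simp only; rw [h1]
        omega
    have hsum1 : ∑ j : Fin N, min (w (j : ℕ)) k = ∑ i ∈ S, nn i := by
      simp only [hminS]
      have h4 : ∀ j : Fin N, (S.filter fun i => (j : ℕ) + 1 ≤ nn i).card
          = ∑ i ∈ S, (if (j : ℕ) + 1 ≤ nn i then 1 else 0) :=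
        fun j => Finset.card_filter _ _
      simp only [h4]
      rw [Finset.sum_comm]
      apply Finset.sum_congr rfl
      intro i _
      rw [FC2]
      exact min_eq_left (hnnle i)
    rw [hsum1, ← hLIN k]
    exact KC X hX S k (by rw [hcardS]; omega)
  -- CORE hypotheses
  have hceq : ∑ s ∈ Finset.range M, c s = N := by
    rw [hSWc]
    rw [← hNlam]
    apply Finset.sum_congr rfl
    intro i _
    have := hlamle i
    omega
  have hdeq : ∑ s ∈ Finset.range M, d s = N := by
    rw [hSWd]
    have h1 : ∀ j : Fin N, min (w (j : ℕ)) M = w (j : ℕ) :=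
      fun j => min_eq_left ((hwle _).trans (by omega))
    simp only [h1]
    have h2 : ∀ j : Fin N, w (j : ℕ) = ∑ i : Fin m, (if (j : ℕ) + 1 ≤ nn i then 1 else 0) :=
      fun j => Finset.card_filter _ _
    simp only [h2]
    rw [Finset.sum_comm]
    have h4 : ∀ i : Fin m, ∑ j : Fin N, (if (j : ℕ) + 1 ≤ nn i then 1 else 0) = nn i :=
      fun i => by rw [FC2]; exact min_eq_left (hnnle i)
    simp only [h4]
    exact hsum
  have hdom : ∀ k, k ≤ M → ∑ s ∈ Finset.range k, d s ≤ ∑ s ∈ Finset.range k, c s := by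
    intro k _
    rw [hSWd, hSWc]
    exact hTOP k
  have hCORE := core_min_sum c d M r hdanti (hceq.trans hdeq.symm) hdom
  -- Λ side
  obtain ⟨t, htle, htcard, htsum⟩ := topSum_exists_sub (Multiset.map lam Finset.univ.val) r
  have htlt : ∀ x ∈ t, x < M := by
    intro x hx
    have hx2 := Multiset.mem_of_le htle hx
    obtain ⟨i, -, rfl⟩ := Multiset.mem_map.mp hx2
    have := hlamle i
    omega
  have hΛ : topSum (Multiset.map lam Finset.univ.val) r
      ≤ ∑ s ∈ Finset.range M, min r (c s) := by
    rw [htsum, MS t M htlt]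
    apply Finset.sum_le_sum
    intro s _
    have h1 : t.countP (fun x => s + 1 ≤ x) ≤ r :=
      (Multiset.countP_le_card _ _).trans htcard
    have h2 : t.countP (fun x => s + 1 ≤ x) ≤ c s := by
      refine (Multiset.countP_le_of_le _ htle).trans ?_
      rw [Multiset.countP_map]
      exact le_of_eq rfl
    omega
  -- Μ side
  have hM2 : (Multiset.map
        (fun j : Fin N => (Finset.univ.filter fun i : Fin m => (j : ℕ) + 1 ≤ nn i).card)
        (Finset.univ.val : Multiset (Fin N))) = ↑(List.map w (List.range N)) := by
    have h1 : (fun j : Fin N =>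
        (Finset.univ.filter fun i : Fin m => (j : ℕ) + 1 ≤ nn i).card)
        = (fun j : Fin N => w (j : ℕ)) := rfl
    rw [h1, Fin.univ_val_map, ofFn_comp_range]
  have hμtop : topSum (Multiset.map
        (fun j : Fin N => (Finset.univ.filter fun i : Fin m => (j : ℕ) + 1 ≤ nn i).card)
        Finset.univ.val) r = ∑ j ∈ Finset.range (min r N), w j := by
    rw [hM2, topSum_antitone w hwanti N r]
  have hd2 : ∑ s ∈ Finset.range M, min r (d s) = ∑ j ∈ Finset.range (min r N), w j := by
    have hds : ∀ s, min r (d s)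
        = ((Finset.range (min r N)).filter (fun j => s + 1 ≤ w j)).card := by
      intro s
      have hfin : d s = ((Finset.range N).filter (fun j => s + 1 ≤ w j)).card := by
        rw [show d s = ∑ j : Fin N, (if s + 1 ≤ w (j : ℕ) then 1 else 0) from
            Finset.card_filter _ _,
          Fin.sum_univ_eq_sum_range (fun j => if s + 1 ≤ w j then 1 else 0) N,
          ← Finset.card_filter]
      rw [filter_antitone_card w hwanti (s + 1) N (min r N) (min_le_right r N), ← hfin]
      have := hdle s
      omega
    simp only [hds]
    have h3 : ∀ s, ((Finset.range (min r N)).filter (fun j => s + 1 ≤ w j)).card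
        = ∑ j ∈ Finset.range (min r N), (if s + 1 ≤ w j then 1 else 0) :=
      fun s => Finset.card_filter _ _
    simp only [h3]
    rw [Finset.sum_comm]
    apply Finset.sum_congr rfl
    intro j _
    rw [RC]
    exact min_eq_left ((hwle j).trans (by omega))
  calc topSum (Multiset.map lam Finset.univ.val) r
      ≤ ∑ s ∈ Finset.range M, min r (c s) := hΛ
    _ ≤ ∑ s ∈ Finset.range M, min r (d s) := hCORE
    _ = topSum (Multiset.map
        (fun j : Fin N => (Finset.univ.filter fun i : Fin m => (j : ℕ) + 1 ≤ nn i).card)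
        Finset.univ.val) r := by rw [hd2, hμtop]
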